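/- Let H be a minimal hypergraph with edge set F, |F| = m, minimum degree δ, maximum degree Δ, and average rank l(H). Then for every nonempty proper subset S of F, l(H)/Δ < (1/|S|)·( Σ_{f∈S} |f| − Σ_{i=δ}^{Δ} Σ_{j=1}^{i} σᵢʲ(S)·(j − i/Δ) ), where σᵢʲ(S) is the number of vertices of degree i in H that lie in exactly j hyperedges of S. -/

import Mathlib

open Finset

/-- A simple, loopless hypergraph: hyperedges have at least 2 vertices, no hyperedge
contains another, and every vertex lies in some hyperedge. -/
structure SimpleHypergraph (V : Type) [Fintype V] [DecidableEq V] where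
  F : Finset (Finset V)
  no_loops : ∀ f ∈ F, 2 ≤ f.card
  simple : ∀ f ∈ F, ∀ g ∈ F, f ⊆ g → f = g
  cover : ∀ v : V, ∃ f ∈ F, v ∈ f

variable {V : Type} [Fintype V] [DecidableEq V]

/-- A hypergraph is linear if distinct hyperedges share at most one vertex. -/
def SimpleHypergraph.Linear (H : SimpleHypergraph V) : Prop :=
  ∀ f ∈ H.F, ∀ g ∈ H.F, f ≠ g → (f ∩ g).card ≤ 1

/-- The degree of a vertex: the number of hyperedges containing it. -/
def SimpleHypergraph.deg (H : SimpleHypergraph V) (v : V) : ℕ :=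
  (H.F.filter (fun f => v ∈ f)).card

/-- The 2-section of a hypergraph. -/
def SimpleHypergraph.twoSection (H : SimpleHypergraph V) : SimpleGraph V where
  Adj u v := u ≠ v ∧ ∃ f ∈ H.F, u ∈ f ∧ v ∈ f
  symm := ⟨by
    rintro u v ⟨h, f, hf, h1, h2⟩
    exact ⟨h.symm, f, hf, h2, h1⟩⟩
  loopless := ⟨fun v h => h.1 rfl⟩

/-- The rank: the maximum size of a hyperedge. -/
def SimpleHypergraph.rank (H : SimpleHypergraph V) : ℕ := H.F.sup Finset.card

/-- The anti-rank: the minimum size of a hyperedge. -/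
noncomputable def SimpleHypergraph.antiRank (H : SimpleHypergraph V) : ℕ :=
  sInf (Finset.card '' (H.F : Set (Finset V)))

/-- The minimum degree. -/
noncomputable def SimpleHypergraph.minDegree (H : SimpleHypergraph V) : ℕ :=
  sInf (Set.range H.deg)

/-- The maximum degree. -/
def SimpleHypergraph.maxDegree (H : SimpleHypergraph V) : ℕ :=
  Finset.univ.sup H.deg

/-- The average rank: the average size of a hyperedge. -/
noncomputable def SimpleHypergraph.avgRank (H : SimpleHypergraph V) : ℝ :=
  (∑ f ∈ H.F, (f.card : ℝ)) / H.F.card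

/-- A tree decomposition of a graph. -/
structure TreeDecomp {W : Type} (G : SimpleGraph W) where
  τ : Type
  finT : Fintype τ
  tree : SimpleGraph τ
  conn : tree.Connected
  acyc : tree.IsAcyclic
  bags : τ → Finset W
  /-- (T1): the bags containing a vertex form a nonempty connected subtree. -/
  bags_conn : ∀ v : W, (tree.induce {t | v ∈ bags t}).Connected
  /-- (T2): every edge is contained in some bag. -/
  bags_edge : ∀ u v : W, G.Adj u v → ∃ t, u ∈ bags t ∧ v ∈ bags t

/-- The width of a tree decomposition: max bag size minus one. -/
noncomputable def TreeDecomp.width {W : Type} {G : SimpleGraph W} (d : TreeDecomp G) : ℕ :=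
  letI := d.finT
  (Finset.univ.sup fun t => (d.bags t).card) - 1

/-- The treewidth of a graph. -/
noncomputable def treewidth {W : Type} (G : SimpleGraph W) : ℕ :=
  sInf {n | ∃ d : TreeDecomp G, d.width = n}

/-- A supertree decomposition of a hypergraph. -/
structure SupertreeDecomp (H : SimpleHypergraph V) extends TreeDecomp H.twoSection where
  lam : τ → Finset (Finset V)
  lam_sub : ∀ t, lam t ⊆ H.F
  /-- (TII): every bag is covered by its hyperedges. -/
  bag_cover : ∀ t, ∀ v ∈ bags t, ∃ f ∈ lam t, v ∈ f
  /-- (TIII): the nodes containing a hyperedge form a nonempty connected subtree. -/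
  lam_conn : ∀ f ∈ H.F, (tree.induce {t | f ∈ lam t}).Connected
  /-- (TIV): intersecting hyperedges appear together in some bag. -/
  lam_meet : ∀ f ∈ H.F, ∀ g ∈ H.F, (f ∩ g).Nonempty → ∃ t, f ∈ lam t ∧ g ∈ lam t

/-- The width of a supertree decomposition: max number of hyperedges in a bag. -/
noncomputable def SupertreeDecomp.width {H : SimpleHypergraph V} (d : SupertreeDecomp H) : ℕ :=
  letI := d.finT
  Finset.univ.sup fun t => (d.lam t).card

/-- The supertree width of a hypergraph. -/
noncomputable def stw (H : SimpleHypergraph V) : ℕ :=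
  sInf {n | ∃ d : SupertreeDecomp H, d.width = n}

/-- The line graph of a hypergraph. -/
def SimpleHypergraph.lineGraph (H : SimpleHypergraph V) : SimpleGraph {f // f ∈ H.F} where
  Adj f g := f ≠ g ∧ ((f : Finset V) ∩ (g : Finset V)).Nonempty
  symm := ⟨by
    rintro f g ⟨h, hfg⟩
    exact ⟨h.symm, by rwa [Finset.inter_comm]⟩⟩
  loopless := ⟨fun f h => h.1 rfl⟩

/-- A hypergraph is 2-regular if every vertex has degree exactly 2. -/
def SimpleHypergraph.TwoRegular (H : SimpleHypergraph V) : Prop := ∀ v : V, H.deg v = 2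

/-- For a 2-regular linear hypergraph, the dual is a simple graph on the hyperedges:
two hyperedges are adjacent iff some vertex lies in both. -/
def SimpleHypergraph.dualGraph (H : SimpleHypergraph V) : SimpleGraph {f // f ∈ H.F} where
  Adj f g := f ≠ g ∧ ∃ v : V, v ∈ (f : Finset V) ∧ v ∈ (g : Finset V)
  symm := ⟨by
    rintro f g ⟨h, v, h1, h2⟩
    exact ⟨h.symm, v, h2, h1⟩⟩
  loopless := ⟨fun f h => h.1 rfl⟩
lemma doubleCount (S : Finset (Finset V)) :
    ∑ f ∈ S, f.card = ∑ v : V, (S.filter (fun f => v ∈ f)).card := by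
  simp_rw [Finset.card_filter]
  rw [Finset.sum_comm]
  simp

lemma ident1 (H : SimpleHypergraph V) (δ Δ : ℕ) (hb : ∀ v : V, H.deg v ∈ Finset.Icc δ Δ) :
    ∑ i ∈ Finset.Icc δ Δ, i * (Finset.univ.filter (fun v : V => H.deg v = i)).card
      = ∑ f ∈ H.F, f.card := by
  rw [doubleCount]
  rw [← Finset.sum_fiberwise_of_maps_to (fun v _ => hb v)
    (f := fun v => (H.F.filter (fun f => v ∈ f)).card)]
  refine Finset.sum_congr rfl fun i _ => ?_
  have h : ∀ v ∈ Finset.univ.filter (fun v : V => H.deg v = i),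
      (H.F.filter (fun f => v ∈ f)).card = i := fun v hv => (Finset.mem_filter.mp hv).2
  rw [Finset.sum_congr rfl h, Finset.sum_const, smul_eq_mul, mul_comm]

lemma ident2 (H : SimpleHypergraph V) (δ Δ : ℕ) (hb : ∀ v : V, H.deg v ∈ Finset.Icc δ Δ)
    (S : Finset (Finset V)) (hS : S ⊆ H.F) :
    ∑ i ∈ Finset.Icc δ Δ, ∑ j ∈ Finset.Icc 1 i,
        j * (Finset.univ.filter
          (fun v : V => H.deg v = i ∧ (S.filter (fun f => v ∈ f)).card = j)).card
      = ∑ f ∈ S, f.card := by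
  have hdS : ∀ v : V, (S.filter (fun f => v ∈ f)).card ≤ H.deg v :=
    fun v => Finset.card_le_card (Finset.filter_subset_filter _ hS)
  rw [doubleCount]
  rw [← Finset.sum_fiberwise_of_maps_to (fun v _ => hb v)
    (f := fun v => (S.filter (fun f => v ∈ f)).card)]
  refine Finset.sum_congr rfl fun i _ => ?_
  rw [← Finset.sum_fiberwise_of_maps_to (g := fun v => (S.filter (fun f => v ∈ f)).card)
    (s := Finset.univ.filter (fun v : V => H.deg v = i))
    (t := Finset.Icc 0 i) (fun v hv => Finset.mem_Icc.mpr
      ⟨Nat.zero_le _, (Finset.mem_filter.mp hv).2 ▸ hdS v⟩)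
    (f := fun v => (S.filter (fun f => v ∈ f)).card)]
  rw [← Finset.sum_subset (Finset.Icc_subset_Icc (Nat.zero_le 1) le_rfl)
    (fun j hj hj' => ?_)]
  · refine Finset.sum_congr rfl fun j _ => ?_
    rw [Finset.filter_filter, Finset.sum_congr rfl (fun v hv => (Finset.mem_filter.mp hv).2.2),
      Finset.sum_const, smul_eq_mul, mul_comm]
  · have : j = 0 := by
      simp only [Finset.mem_Icc] at hj hj'
      omega
    subst this
    simp only [Finset.sum_congr rfl (fun v hv => (Finset.mem_filter.mp hv).2)]
    simp

/-- Lemma 3.1: for a minimal hypergraph `H` and every nonempty proper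
subset `S` of its edge set, `l(H)/Δ < (1/|S|)(Σ_{f∈S}|f| − Σ_{i,j} σᵢʲ(S)(j − i/Δ))`. -/
theorem minimal_hypergraph_ineq (H : SimpleHypergraph V) (δ Δ m : ℕ)
    (hδ : δ = H.minDegree) (hΔ : Δ = H.maxDegree) (hm : m = H.F.card)
    (σ : Finset (Finset V) → ℕ → ℕ → ℕ)
    (hσ : ∀ S i j, σ S i j =
      (Finset.univ.filter
        (fun v : V => H.deg v = i ∧ (S.filter (fun f => v ∈ f)).card = j)).card)
    -- `H` is minimal: `l(H_S) < l(H)` for every nonempty proper `S ⊆ F`.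
    (hmin : ∀ S ⊆ H.F, S.Nonempty → S ≠ H.F →
      (∑ i ∈ Finset.Icc δ Δ, (i : ℝ) *
          (((Finset.univ.filter (fun v : V => H.deg v = i)).card : ℝ)
            - ∑ j ∈ Finset.Icc 1 i, (σ S i j : ℝ))) / ((m : ℝ) - S.card)
        < H.avgRank) :
    ∀ S ⊆ H.F, S.Nonempty → S ≠ H.F →
      H.avgRank / (Δ : ℝ) <
        (1 / (S.card : ℝ)) * ((∑ f ∈ S, (f.card : ℝ))
          - ∑ i ∈ Finset.Icc δ Δ, ∑ j ∈ Finset.Icc 1 i,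
              (σ S i j : ℝ) * ((j : ℝ) - (i : ℝ) / (Δ : ℝ))) := by
  intro S hS hne hne'
  have hb : ∀ v : V, H.deg v ∈ Finset.Icc δ Δ := fun v =>
    Finset.mem_Icc.mpr ⟨hδ ▸ Nat.sInf_le ⟨v, rfl⟩, hΔ ▸ Finset.le_sup (Finset.mem_univ v)⟩
  obtain ⟨f, hfS⟩ := hne
  have hfF := hS hfS
  have hf2 : 0 < f.card := lt_of_lt_of_le two_pos (H.no_loops f hfF)
  obtain ⟨v, hv⟩ := Finset.card_pos.mp hf2
  have hdeg1 : 1 ≤ H.deg v := Finset.card_pos.mpr ⟨f, Finset.mem_filter.mpr ⟨hfF, hv⟩⟩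
  have hΔ1 : 1 ≤ Δ := le_trans hdeg1 (Finset.mem_Icc.mp (hb v)).2
  have hΔpos : (0:ℝ) < Δ := by exact_mod_cast hΔ1
  have hspos : (0:ℝ) < S.card := by exact_mod_cast Finset.card_pos.mpr ⟨f, hfS⟩
  have hsm : S.card < m := hm ▸ Finset.card_lt_card (HasSubset.Subset.ssubset_of_ne hS hne')
  have hmspos : (0:ℝ) < (m:ℝ) - S.card := by
    have : (S.card:ℝ) < m := by exact_mod_cast hsm
    linarith
  have hmpos : (0:ℝ) < m := lt_trans hspos (by exact_mod_cast hsm)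
  set l := H.avgRank with hl
  have hT : (∑ i ∈ Finset.Icc δ Δ,
        (i:ℝ) * ((Finset.univ.filter (fun v : V => H.deg v = i)).card : ℝ))
      = ∑ f ∈ H.F, (f.card : ℝ) := by exact_mod_cast ident1 H δ Δ hb
  have hB : (∑ i ∈ Finset.Icc δ Δ, ∑ j ∈ Finset.Icc 1 i, (j:ℝ) * (σ S i j : ℝ))
      = ∑ f ∈ S, (f.card : ℝ) := by
    simp_rw [hσ]
    exact_mod_cast ident2 H δ Δ hb S hS
  set A : ℝ := ∑ i ∈ Finset.Icc δ Δ, ∑ j ∈ Finset.Icc 1 i, (i:ℝ) * (σ S i j : ℝ) with hA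
  have hlm : l * m = ∑ f ∈ H.F, (f.card : ℝ) := by
    rw [hl, SimpleHypergraph.avgRank, hm]
    have h0 : ((H.F.card : ℕ) : ℝ) ≠ 0 := by rw [← hm]; exact_mod_cast hmpos.ne'
    exact div_mul_cancel₀ _ h0
  have key := hmin S hS ⟨f, hfS⟩ hne'
  have hnum : (∑ i ∈ Finset.Icc δ Δ, (i : ℝ) *
          (((Finset.univ.filter (fun v : V => H.deg v = i)).card : ℝ)
            - ∑ j ∈ Finset.Icc 1 i, (σ S i j : ℝ)))
      = (∑ f ∈ H.F, (f.card : ℝ)) - A := by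
    rw [← hT, hA, ← Finset.sum_sub_distrib]
    refine Finset.sum_congr rfl fun i _ => ?_
    rw [mul_sub, Finset.mul_sum]
  rw [hnum, div_lt_iff₀ hmspos] at key
  have hkey : l * S.card < A := by
    have h1 : l * ((m:ℝ) - S.card) = l * m - l * S.card := by ring
    rw [h1, hlm] at key
    linarith
  have hsplit : ∑ i ∈ Finset.Icc δ Δ, ∑ j ∈ Finset.Icc 1 i,
        (σ S i j : ℝ) * ((j : ℝ) - (i : ℝ) / (Δ : ℝ))
      = (∑ f ∈ S, (f.card : ℝ)) - A / Δ := by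
    have h2 : ∀ i ∈ Finset.Icc δ Δ, ∑ j ∈ Finset.Icc 1 i,
          (σ S i j : ℝ) * ((j : ℝ) - (i : ℝ) / (Δ : ℝ))
        = (∑ j ∈ Finset.Icc 1 i, (j:ℝ) * (σ S i j : ℝ))
          - (∑ j ∈ Finset.Icc 1 i, (i:ℝ) * (σ S i j : ℝ)) / Δ := by
      intro i _
      rw [Finset.sum_div, ← Finset.sum_sub_distrib]
      refine Finset.sum_congr rfl fun j _ => ?_
      ring
    rw [Finset.sum_congr rfl h2, Finset.sum_sub_distrib, ← Finset.sum_div, hB, hA]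
  rw [hsplit]
  have hfin : (1 / (S.card : ℝ)) * ((∑ f ∈ S, (f.card : ℝ))
      - ((∑ f ∈ S, (f.card : ℝ)) - A / Δ)) = A / (S.card * Δ) := by
    field_simp
    ring
  rw [hfin, div_lt_div_iff₀ hΔpos (by positivity)]
  nlinarith [hkey, hΔpos]
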